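/- If at every iteration k the accepted step satisfies f(x^{k+1}) ≤ f_bar_k + eta_k - gamma * alpha_k^2 * f(x^k), where f_bar_k = max{f(x^k), ..., f(x^{max(0, k-M+1)})}, eta_k > 0, and sum of eta_k over all k is finite, then the sequence f(x^k) is bounded above by max{f(x^0), ..., f(x^{M-1})} plus the sum of all eta_k. -/

import Mathlib

/-- If every accepted step satisfies the nonmonotone sufficient-decrease condition
with summable tolerances `ηₖ`, then `f(xᵏ)` is bounded above by
`max{f(x⁰),…,f(x^{M-1})} + Σ ηₖ`. -/
theorem nonmonotone_decrease_bounded {n : ℕ} (f : (Fin n → ℝ) → ℝ)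
    (hfnn : ∀ z, 0 ≤ f z) (γ : ℝ) (hγ0 : 0 < γ) (hγ1 : γ < 1)
    (M : ℕ) (hM : 0 < M) (η : ℕ → ℝ) (hη : ∀ k, 0 < η k) (hsum : Summable η)
    (x : ℕ → Fin n → ℝ) (α : ℕ → ℝ)
    (hdec : ∀ k, f (x (k + 1)) ≤
      (Finset.Icc (k + 1 - M) k).sup' ⟨k, by rw [Finset.mem_Icc]; omega⟩
        (fun j => f (x j)) + η k - γ * (α k) ^ 2 * f (x k)) :
    ∀ k, f (x k) ≤
      (Finset.range M).sup' (Finset.nonempty_range_iff.mpr (by omega))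
        (fun j => f (x j)) + ∑' k, η k := by
  set F := (Finset.range M).sup' (Finset.nonempty_range_iff.mpr (by omega))
    (fun j => f (x j)) with hFdef
  have key : ∀ k, f (x k) ≤ F + ∑ i ∈ Finset.range k, η i := by
    intro k
    induction k using Nat.strong_induction_on with
    | _ k ih =>
      match k with
      | 0 =>
        simp only [Finset.range_zero, Finset.sum_empty, add_zero]
        exact Finset.le_sup' (fun j => f (x j)) (Finset.mem_range.mpr hM)
      | (m + 1) =>
        have h1 := hdec m
        have h2 : (Finset.Icc (m + 1 - M) m).sup'
            ⟨m, by rw [Finset.mem_Icc]; omega⟩ (fun j => f (x j)) ≤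
            F + ∑ i ∈ Finset.range m, η i := by
          apply Finset.sup'_le
          intro j hj
          rw [Finset.mem_Icc] at hj
          calc f (x j) ≤ F + ∑ i ∈ Finset.range j, η i := ih j (by omega)
            _ ≤ F + ∑ i ∈ Finset.range m, η i := by
                exact add_le_add_right (Finset.sum_le_sum_of_subset_of_nonneg
                  (Finset.range_subset_range.mpr hj.2) (fun i _ _ => (hη i).le)) F
        have h3 : 0 ≤ γ * (α m) ^ 2 * f (x m) :=
          mul_nonneg (mul_nonneg hγ0.le (sq_nonneg _)) (hfnn _)
        calc f (x (m + 1)) ≤ _ := h1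
          _ ≤ F + ∑ i ∈ Finset.range m, η i + η m - 0 := by linarith
          _ = F + ∑ i ∈ Finset.range (m + 1), η i := by
              rw [Finset.sum_range_succ]; ring
  intro k
  calc f (x k) ≤ F + ∑ i ∈ Finset.range k, η i := key k
    _ ≤ F + ∑' i, η i := by
        gcongr
        exact Summable.sum_le_tsum _ (fun i _ => (hη i).le) hsum
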